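/- If an inverse semigroup T (with G̃^R ⊆ T ⊆ P*(G) ⋊ G) admits a meet-preserving semigroup homomorphism θ*: T → S extending the unital premorphism θ: G → S, then E(S) is (Supp(T),θ)-meet complete, and θ*(A,1) = ⋀_{a∈A} θ(a)θ(a)⁻¹ for every A ∈ Supp(T). -/

import Mathlib

variable {G : Type*} [Group G]

/-- `P*(G)`: the nonempty subsets of `G` (a semilattice under union). -/
abbrev PStar (G : Type*) [Group G] := {A : Set G // A.Nonempty}

/-- The semidirect product `P*(G) ⋊ G` (as a set: `P*(G) × G`). -/
abbrev SD (G : Type*) [Group G] := PStar G × G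

/-- Multiplication `(A,g)(B,h) = (A ∪ gB, gh)` in `P*(G) ⋊ G`. -/
def sdMul (x y : SD G) : SD G :=
  (⟨x.1.1 ∪ (fun a => x.2 * a) '' y.1.1, x.1.2.inl⟩, x.2 * y.2)

/-- The inverse `(g⁻¹A, g⁻¹)` of `(A,g)` in `P*(G) ⋊ G`. -/
def sdInv (x : SD G) : SD G :=
  (⟨(fun a => x.2⁻¹ * a) '' x.1.1, x.1.2.image _⟩, x.2⁻¹)

/-- The Birget–Rhodes expansion `G̃^R` sitting inside `P*(G) ⋊ G`:
pairs `(A,g)` with `A` finite and `{1,g} ⊆ A`. -/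
def BRset (G : Type*) [Group G] : Set (SD G) :=
  {x | x.1.1.Finite ∧ (1 : G) ∈ x.1.1 ∧ x.2 ∈ x.1.1}

/-- The element `({1,g}, g)` of `G̃^R`. -/
def iotaBR (g : G) : SD G := (⟨{1, g}, ⟨1, Or.inl rfl⟩⟩, g)

/-- The support of a subset `T` of `P*(G) ⋊ G`. -/
def Supp (T : Set (SD G)) : Set (PStar G) := {A | ∃ g : G, (A, g) ∈ T}

/-- An inverse monoid. -/
class InverseMonoid (S : Type*) extends Monoid S, Inv S where
  mul_inv_mul : ∀ a : S, a * a⁻¹ * a = a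
  inv_mul_inv : ∀ a : S, a⁻¹ * a * a⁻¹ = a⁻¹
  inv_unique : ∀ a b : S, a * b * a = a → b * a * b = b → b = a⁻¹

/-- A unital premorphism from a group to an inverse monoid. -/
def IsUnitalPremorphism {G S : Type*} [Group G] [InverseMonoid S] (θ : G → S) : Prop :=
  θ 1 = 1 ∧ (∀ g : G, θ g⁻¹ = (θ g)⁻¹) ∧
    ∀ g h : G, θ g⁻¹ * θ g * θ h = θ g⁻¹ * θ (g * h)

/-- The natural partial order on an inverse monoid: `s ≤ t` iff `s = e * t`
for some idempotent `e`. -/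
def natLe {S : Type*} [InverseMonoid S] (s t : S) : Prop :=
  ∃ e : S, e * e = e ∧ s = e * t

/-- `m` is the meet (greatest lower bound) of `X` with respect to the
natural partial order. -/
def IsMeet {S : Type*} [InverseMonoid S] (X : Set S) (m : S) : Prop :=
  (∀ x ∈ X, natLe m x) ∧ ∀ b : S, (∀ x ∈ X, natLe b x) → natLe b m

/-- The family `{θ(a)θ(a)⁻¹ : a ∈ A}` of idempotents. -/
def thFam {G S : Type*} [Group G] [InverseMonoid S] (θ : G → S) (A : Set G) : Set S :=
  (fun a => θ a * (θ a)⁻¹) '' A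

/-- The natural partial order on `P*(G) ⋊ G`. -/
def sdLe {G : Type*} [Group G] (x y : SD G) : Prop :=
  ∃ e : SD G, sdMul e e = e ∧ x = sdMul e y

/-- if an inverse intermediate extension `T` of `G̃^R` admits a
meet-preserving semigroup homomorphism `θ* : T → S` extending the unital
premorphism `θ`, then `E(S)` is `(Supp T, θ)`-meet complete, and for every
`A ∈ Supp T` the meet of `{θ(a)θ(a)⁻¹ : a ∈ A}` is `θ*(A,1)`. -/
theorem stmt9 {G S : Type*} [Group G] [InverseMonoid S] (θ : G → S)
    (hθ : IsUnitalPremorphism θ)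
    (T : Set (SD G))
    (hmul : ∀ x ∈ T, ∀ y ∈ T, sdMul x y ∈ T)
    (hinv : ∀ x ∈ T, sdInv x ∈ T)
    (hBR : BRset G ⊆ T)
    (θstar : SD G → S)
    (hhom : ∀ x ∈ T, ∀ y ∈ T, θstar (sdMul x y) = θstar x * θstar y)
    (hext : ∀ g : G, θstar (iotaBR g) = θ g)
    (hmp : ∀ X ⊆ T, ∀ m ∈ T,
      ((∀ x ∈ X, sdLe m x) ∧ ∀ b ∈ T, (∀ x ∈ X, sdLe b x) → sdLe b m) →
      IsMeet (θstar '' X) (θstar m)) :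
    ∀ A : PStar G, A ∈ Supp T → IsMeet (thFam θ A.1) (θstar (A, (1 : G))) := by
  obtain ⟨hθ1, hθinv, -⟩ := hθ
  rintro A ⟨g, hAg⟩
  -- the element ({1,a},1) of BRset
  set f : G → SD G := fun a => (⟨{1, a}, ⟨1, Or.inl rfl⟩⟩, (1 : G)) with hf
  have hfT : ∀ a : G, f a ∈ T := by
    intro a
    apply hBR
    exact ⟨(Set.finite_singleton a).insert 1, Or.inl rfl, Or.inl rfl⟩
  have hiT : ∀ a : G, iotaBR a ∈ T := by
    intro a
    apply hBR
    exact ⟨(Set.finite_singleton a).insert 1, Or.inl rfl, Or.inr rfl⟩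
  -- (A,1) ∈ T
  have hA1 : ((A, (1 : G)) : SD G) ∈ T := by
    have h1 := hmul _ hAg _ (hinv _ hAg)
    have h2 : sdMul (A, g) (sdInv (A, g)) = (A, (1 : G)) := by
      refine Prod.ext (Subtype.ext ?_) (by simp [sdMul, sdInv])
      show A.1 ∪ (fun a => g * a) '' ((fun a => g⁻¹ * a) '' A.1) = A.1
      ext x
      simp only [Set.image_image, Set.mem_union, Set.mem_image]
      constructor
      · rintro (h | ⟨y, hy, rfl⟩)
        · exact h
        · simpa using hy
      · exact Or.inl
    rwa [h2] at h1
  -- A₁ = A ∪ {1}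
  set A₁ : PStar G := ⟨insert 1 A.1, ⟨1, Set.mem_insert _ _⟩⟩ with hA₁def
  have hmul1 : sdMul (iotaBR 1) (A, (1 : G)) = (A₁, (1 : G)) := by
    refine Prod.ext (Subtype.ext ?_) (by simp [sdMul, iotaBR])
    show ({1, 1} : Set G) ∪ (fun a => 1 * a) '' A.1 = insert 1 A.1
    ext x; simp [or_comm]
  have hA₁T : ((A₁, (1 : G)) : SD G) ∈ T := by
    have := hmul _ (hfT 1) _ hA1
    have h2 : sdMul (f 1) (A, (1:G)) = (A₁, (1:G)) := hmul1
    rwa [h2] at this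
  -- θstar on f a
  have hθf : ∀ a : G, θstar (f a) = θ a * (θ a)⁻¹ := by
    intro a
    have h2 : sdMul (iotaBR a) (iotaBR a⁻¹) = f a := by
      refine Prod.ext (Subtype.ext ?_) (by simp [sdMul, iotaBR, f])
      show ({1, a} : Set G) ∪ (fun x => a * x) '' {1, a⁻¹} = {1, a}
      ext x
      simp only [Set.image_insert_eq, Set.image_singleton, Set.mem_union,
        Set.mem_insert_iff, Set.mem_singleton_iff, mul_one, mul_inv_cancel]
      tauto
    have h3 := hhom _ (hiT a) _ (hiT a⁻¹)
    rw [h2] at h3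
    rw [h3, hext, hext, hθinv]
  -- θstar (A₁,1) = θstar (A,1)
  have hθA₁ : θstar (A₁, (1 : G)) = θstar (A, (1 : G)) := by
    have h3 := hhom _ (hiT 1) _ hA1
    rw [hmul1] at h3
    rw [h3, hext, hθ1, one_mul]
  -- the family X in T
  set X : Set (SD G) := f '' A.1 with hX
  have hXT : X ⊆ T := by rintro x ⟨a, -, rfl⟩; exact hfT a
  have himg : θstar '' X = thFam θ A.1 := by
    rw [hX, Set.image_image, thFam]
    exact Set.image_congr fun a _ => hθf a
  -- meet conditions in SD G
  have hmeet : (∀ x ∈ X, sdLe (A₁, (1:G)) x) ∧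
      ∀ b ∈ T, (∀ x ∈ X, sdLe b x) → sdLe b (A₁, (1:G)) := by
    constructor
    · rintro x ⟨a, ha, rfl⟩
      refine ⟨(A₁, 1), ?_, ?_⟩
      · refine Prod.ext (Subtype.ext ?_) (by simp [sdMul])
        show A₁.1 ∪ (fun x => 1 * x) '' A₁.1 = A₁.1
        simp
      · refine Prod.ext (Subtype.ext ?_) (by simp [sdMul, f])
        show A₁.1 = A₁.1 ∪ (fun x => 1 * x) '' {1, a}
        have hsub : ({1, a} : Set G) ⊆ A₁.1 := by
          rintro x (rfl | rfl)
          · exact Set.mem_insert _ _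
          · exact Set.mem_insert_of_mem _ ha
        rw [show (fun x => (1:G) * x) '' {1, a} = {1, a} by simp,
          Set.union_eq_self_of_subset_right hsub]
    · rintro b hbT hb
      obtain ⟨a₀, ha₀⟩ := A.2
      -- b.2 = 1
      have hb2 : b.2 = 1 := by
        obtain ⟨e, he, hbe⟩ := hb _ ⟨a₀, ha₀, rfl⟩
        have he2 : e.2 = 1 := by
          have := congrArg Prod.snd he
          simpa using mul_left_cancel (a := e.2) (by simpa [sdMul] using this)
        have := congrArg Prod.snd hbe
        simp [sdMul, he2] at this
        exact this
      -- A₁ ⊆ b.1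
      have hkey : ∀ a : G, (∃ e : SD G, sdMul e e = e ∧ b = sdMul e (f a)) →
          (1 : G) ∈ b.1.1 ∧ a ∈ b.1.1 := by
        rintro a ⟨e, he, hbe⟩
        have he2 : e.2 = 1 := by
          have := congrArg Prod.snd he
          simpa using mul_left_cancel (a := e.2) (by simpa [sdMul] using this)
        have hset := congrArg (fun z : SD G => z.1.1) hbe
        simp only [sdMul] at hset
        rw [hset]
        constructor
        · exact Or.inr ⟨1, Or.inl rfl, by simp [he2]⟩
        · exact Or.inr ⟨a, Or.inr rfl, by simp [he2]⟩
      have hsub : A₁.1 ⊆ b.1.1 := by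
        rintro x (rfl | hx)
        · exact (hkey a₀ (hb _ ⟨a₀, ha₀, rfl⟩)).1
        · exact (hkey x (hb _ ⟨x, hx, rfl⟩)).2
      refine ⟨b, ?_, ?_⟩
      · refine Prod.ext (Subtype.ext ?_) (by simp [sdMul, hb2])
        show b.1.1 ∪ (fun x => b.2 * x) '' b.1.1 = b.1.1
        simp [hb2]
      · refine Prod.ext (Subtype.ext ?_) (by simp [sdMul, hb2])
        show b.1.1 = b.1.1 ∪ (fun x => b.2 * x) '' A₁.1
        rw [hb2]
        simp only [one_mul, Set.image_id']
        rw [Set.union_eq_self_of_subset_right hsub]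
  have := hmp X hXT _ hA₁T hmeet
  rwa [himg, hθA₁] at this
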